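/- Let C̄ ∈ ℝ^{V×k} have full column rank, let W ∈ ℝ^{k×d} have full row rank with Wᵀ1_k = 1_d (each column of W sums to 1), and let W̄ ∈ ℝ^{k×d} be entrywise nonnegative with W̄ᵀ1_k = 1_d. Let C ∈ ℝ^{V×k} and suppose CW = C̄W̄. Define B = W̄Wᵀ(WWᵀ)^{−1} ∈ ℝ^{k×k}. Then: (a) C = C̄B; (b) Bᵀ1_k = 1_k; (c) BW = W̄; in particular, every row of B lies in the dual cone cone(W)* = {x ∈ ℝ^k : xᵀW ≥ 0 entrywise}. -/

import Mathlib

open scoped BigOperators ENNReal NNReal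
open MeasureTheory Matrix

noncomputable section

/-- Euclidean (ℓ²) norm of a vector in `Fin m → ℝ`. -/
def l2 {m : ℕ} (x : Fin m → ℝ) : ℝ := Real.sqrt (∑ i, x i ^ 2)

/-- The `f`-th standard basis vector of `ℝ^k`. -/
def eVec (k : ℕ) (f : Fin k) : Fin k → ℝ := fun i => if i = f then 1 else 0

/-- The simplicial cone generated by the columns of a matrix. -/
def coneOf {p q : ℕ} (A : Matrix (Fin p) (Fin q) ℝ) : Set (Fin p → ℝ) :=
  {x | ∃ lam : Fin q → ℝ, (∀ j, 0 ≤ lam j) ∧ x = A.mulVec lam}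

/-- The dual cone of a set of vectors. -/
def dualCone {p : ℕ} (S : Set (Fin p → ℝ)) : Set (Fin p → ℝ) :=
  {x | ∀ y ∈ S, 0 ≤ ∑ i, x i * y i}

/-- The second-order cone `K = {x : ‖x‖₂ ≤ xᵀ1}`. -/
def Kset (k : ℕ) : Set (Fin k → ℝ) := {x | l2 x ≤ ∑ i, x i}


lemma mulVec_inj_of_rank {p q : ℕ} (A : Matrix (Fin p) (Fin q) ℝ) (h : A.rank = q) :
    Function.Injective A.mulVec := by
  have h1 := LinearMap.finrank_range_add_finrank_ker A.mulVecLin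
  rw [Matrix.rank] at h
  have hk : Module.finrank ℝ (LinearMap.ker A.mulVecLin) = 0 := by
    have : Module.finrank ℝ (Fin q → ℝ) = q := by simp
    omega
  have hker : LinearMap.ker A.mulVecLin = ⊥ := Submodule.finrank_eq_zero.mp hk
  have := LinearMap.ker_eq_bot.mp hker
  exact this

lemma mul_left_cancel_of_rank {p q r : ℕ} (A : Matrix (Fin p) (Fin q) ℝ) (h : A.rank = q)
    (X Y : Matrix (Fin q) (Fin r) ℝ) (hXY : A * X = A * Y) : X = Y := by
  have hinj := mulVec_inj_of_rank A h
  ext i j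
  have : A.mulVec (fun l => X l j) = A.mulVec (fun l => Y l j) := by
    funext v
    have := congrFun (congrFun hXY v) j
    simpa [Matrix.mulVec, Matrix.mul_apply, dotProduct] using this
  exact congrFun (hinj this) i

/-- Basic properties of `B = W̄Wᵀ(WWᵀ)⁻¹` when `CW = C̄W̄`. -/
theorem stmt18 {V k d : ℕ} (Cb : Matrix (Fin V) (Fin k) ℝ) (hCb : Cb.rank = k)
    (W : Matrix (Fin k) (Fin d) ℝ) (hWrank : W.rank = k)
    (hW1 : ∀ j, ∑ i, W i j = 1)
    (Wb : Matrix (Fin k) (Fin d) ℝ) (hWb0 : ∀ i j, 0 ≤ Wb i j)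
    (hWb1 : ∀ j, ∑ i, Wb i j = 1)
    (C : Matrix (Fin V) (Fin k) ℝ) (hEq : C * W = Cb * Wb) :
    C = Cb * (Wb * Wᵀ * (W * Wᵀ)⁻¹) ∧
    (∀ j, ∑ i, (Wb * Wᵀ * (W * Wᵀ)⁻¹) i j = 1) ∧
    (Wb * Wᵀ * (W * Wᵀ)⁻¹) * W = Wb ∧
    ∀ f : Fin k, (fun i => (Wb * Wᵀ * (W * Wᵀ)⁻¹) f i) ∈ dualCone (coneOf W) := by
  have hMrank : (W * Wᵀ).rank = k := by
    rw [Matrix.rank_self_mul_transpose, hWrank]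
  have hU : IsUnit (W * Wᵀ) := by
    rw [← Matrix.mulVec_injective_iff_isUnit]
    exact mulVec_inj_of_rank _ hMrank
  have hdet : IsUnit (W * Wᵀ).det := (Matrix.isUnit_iff_isUnit_det _).mp hU
  -- part (a)
  have hCM : C * (W * Wᵀ) = Cb * (Wb * Wᵀ) := by
    rw [← Matrix.mul_assoc, hEq, Matrix.mul_assoc]
  have ha : C = Cb * (Wb * Wᵀ * (W * Wᵀ)⁻¹) := by
    calc C = C * (W * Wᵀ) * (W * Wᵀ)⁻¹ :=
          (Matrix.mul_nonsing_inv_cancel_right _ _ hdet).symm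
      _ = Cb * (Wb * Wᵀ) * (W * Wᵀ)⁻¹ := by rw [hCM]
      _ = Cb * (Wb * Wᵀ * (W * Wᵀ)⁻¹) := by rw [Matrix.mul_assoc]
  -- part (b)
  have hb : ∀ j, ∑ i, (Wb * Wᵀ * (W * Wᵀ)⁻¹) i j = 1 := by
    intro j
    set u : Fin k → ℝ := fun _ => 1 with hu
    have huWb : Matrix.vecMul u Wb = Matrix.vecMul u W := by
      funext l
      simp [Matrix.vecMul, dotProduct, hu, hWb1 l, hW1 l]
    have key : Matrix.vecMul u (Wb * Wᵀ * (W * Wᵀ)⁻¹) = u := by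
      calc Matrix.vecMul u (Wb * Wᵀ * (W * Wᵀ)⁻¹)
          = Matrix.vecMul (Matrix.vecMul u Wb) (Wᵀ * (W * Wᵀ)⁻¹) := by
            rw [Matrix.mul_assoc, ← Matrix.vecMul_vecMul]
        _ = Matrix.vecMul u (W * Wᵀ * (W * Wᵀ)⁻¹) := by
            rw [huWb, Matrix.vecMul_vecMul, ← Matrix.mul_assoc]
        _ = Matrix.vecMul u 1 := by rw [Matrix.mul_nonsing_inv _ hdet]
        _ = u := Matrix.vecMul_one u
    have := congrFun key j
    simpa [Matrix.vecMul, dotProduct, hu] using this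
  -- part (c)
  have hc : (Wb * Wᵀ * (W * Wᵀ)⁻¹) * W = Wb := by
    apply mul_left_cancel_of_rank Cb hCb
    rw [← Matrix.mul_assoc, ← ha, hEq]
  refine ⟨ha, hb, hc, ?_⟩
  intro f y hy
  obtain ⟨lam, hlam0, rfl⟩ := hy
  have : ∑ i, (Wb * Wᵀ * (W * Wᵀ)⁻¹) f i * W.mulVec lam i
      = ∑ j, Wb f j * lam j := by
    simp only [Matrix.mulVec, dotProduct, Finset.mul_sum]
    rw [Finset.sum_comm]
    refine Finset.sum_congr rfl fun j _ => ?_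
    have := congrFun (congrFun hc f) j
    rw [Matrix.mul_apply] at this
    rw [← this, Finset.sum_mul]
    exact Finset.sum_congr rfl fun i _ => by ring
  rw [this]
  exact Finset.sum_nonneg fun j _ => mul_nonneg (hWb0 f j) (hlam0 j)
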